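/- arXiv:1509.05917 — 2 statements merged into one kernel-verified Lean document; each statement's English description precedes it below -/
import Mathlib

section
/- Let A_1, ..., A_m be non-negative matrices that define bounded operators on ℓ^p, and define N(t) = (‖A_1^{(t)}‖ ‖A_2^{(t)}‖ ⋯ ‖A_m^{(t)}‖)^{1/t} for t ≥ 1. Then N is a decreasing (non-increasing) function on [1, ∞), and ‖A_1 ∘ A_2 ∘ ⋯ ∘ A_m‖ ≤ N(t) for every t ∈ [1, m]. -/
open scoped ENNReal NNReal BigOperators InnerProductSpace

noncomputable section

/-- The sequence space `ℓ^p(ℕ)` (real scalars). -/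
abbrev lpSeq (p : ℝ≥0∞) := lp (fun _ : ℕ => ℝ) p

/-- The (infinite) non-negative matrix `a` defines the bounded operator `T` on `ℓ^p`:
for every `x ∈ ℓ^p` and every row index `i`, the series `∑_j a i j * x j` converges,
with sum equal to `(T x) i`. -/
def Represents (p : ℝ≥0∞) [Fact (1 ≤ p)] (a : ℕ → ℕ → ℝ)
    (T : lpSeq p →L[ℝ] lpSeq p) : Prop :=
  ∀ x : lpSeq p, ∀ i : ℕ, HasSum (fun j => a i j * x j) (T x i)

/-- Hadamard (entrywise) product of two matrices. -/
def hadamard (a b : ℕ → ℕ → ℝ) : ℕ → ℕ → ℝ := fun i j => a i j * b i j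

/-- Hadamard (entrywise) power `a^{(t)}`. -/
def hadPow (a : ℕ → ℕ → ℝ) (t : ℝ) : ℕ → ℕ → ℝ := fun i j => a i j ^ t

/-- Hadamard product of a finite family of matrices. -/
def hadProd {m : ℕ} (A : Fin m → ℕ → ℕ → ℝ) : ℕ → ℕ → ℝ := fun i j => ∏ k, A k i j

/-- Matrix product of two infinite matrices. -/
def matMul (a b : ℕ → ℕ → ℝ) : ℕ → ℕ → ℝ := fun i j => ∑' k, a i k * b k j

/-- The identity matrix. -/
def idMat : ℕ → ℕ → ℝ := fun i j => if i = j then 1 else 0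

/-- Product of a list of matrices. -/
def matListProd : List (ℕ → ℕ → ℝ) → ℕ → ℕ → ℝ
  | [] => idMat
  | a :: l => matMul a (matListProd l)

/-- Transposed matrix. -/
def transp (a : ℕ → ℕ → ℝ) : ℕ → ℕ → ℝ := fun i j => a j i

/-- The cyclic matrix product `A_i A_{i+1} ⋯ A_m A_1 ⋯ A_{i-1}` starting at index `i`. -/
def cycMatProd {m : ℕ} (A : Fin m → ℕ → ℕ → ℝ) (i : Fin m) : ℕ → ℕ → ℝ :=
  matListProd (List.ofFn fun k : Fin m => A (i + k))

/-- The cyclic operator product `T_i T_{i+1} ⋯ T_m T_1 ⋯ T_{i-1}` starting at index `i`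
(operator multiplication is composition). -/
def cycOpProd {m : ℕ} {p : ℝ≥0∞} [Fact (1 ≤ p)]
    (T : Fin m → lpSeq p →L[ℝ] lpSeq p) (i : Fin m) : lpSeq p →L[ℝ] lpSeq p :=
  (List.ofFn fun k : Fin m => T (i + k)).prod

/-- The numerical radius of a bounded operator on `ℓ²`:
`w(T) = sup { |⟨T f, f⟩| : ‖f‖ = 1 }`. -/
def numRadius (T : lpSeq 2 →L[ℝ] lpSeq 2) : ℝ :=
  sSup { r : ℝ | ∃ f : lpSeq 2, ‖f‖ = 1 ∧ r = |⟪T f, f⟫_ℝ| }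

section Aux

variable {p : ℝ≥0∞} [Fact (1 ≤ p)]

lemma p_ne_zero : p ≠ 0 := by
  have h : (1:ℝ≥0∞) ≤ p := Fact.out
  intro h0; rw [h0] at h; simp at h

lemma q_pos (hp : p ≠ ∞) : 0 < p.toReal :=
  ENNReal.toReal_pos p_ne_zero hp

lemma memℓp_abs (x : lpSeq p) : Memℓp (fun i => |x i|) p := by
  have hf := lp.memℓp x
  rcases p.trichotomy with (rfl | rfl | hq)
  · apply memℓp_zero
    simpa [abs_ne_zero] using hf.finite_dsupport
  · apply memℓp_infty
    simpa [Real.norm_eq_abs, abs_abs] using hf.bddAbove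
  · apply memℓp_gen
    simpa [Real.norm_eq_abs, abs_abs] using hf.summable hq

def absLp (x : lpSeq p) : lpSeq p := ⟨fun i => |x i|, memℓp_abs x⟩

@[simp] lemma absLp_apply (x : lpSeq p) (i : ℕ) : absLp x i = |x i| := rfl

lemma norm_absLp (hp : p ≠ ∞) (x : lpSeq p) : ‖absLp x‖ = ‖x‖ := by
  rw [lp.norm_eq_tsum_rpow (q_pos hp), lp.norm_eq_tsum_rpow (q_pos hp)]
  congr 1
  apply tsum_congr
  intro i
  simp [Real.norm_eq_abs, abs_abs]

lemma norm_mono (hp : p ≠ ∞) {f g : lpSeq p} (h : ∀ i, |f i| ≤ |g i|) : ‖f‖ ≤ ‖g‖ := by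
  have hq := q_pos hp
  have hf := lp.hasSum_norm hq f
  have hg := lp.hasSum_norm hq g
  have hle : ‖f‖ ^ p.toReal ≤ ‖g‖ ^ p.toReal := by
    refine hasSum_le (fun i => ?_) hf hg
    exact Real.rpow_le_rpow (norm_nonneg _) (by simpa [Real.norm_eq_abs] using h i) hq.le
  exact (Real.rpow_le_rpow_iff (norm_nonneg _) (norm_nonneg _) hq).mp hle

variable {a b : ℕ → ℕ → ℝ} {T Ta Tb : lpSeq p →L[ℝ] lpSeq p}

lemma rep_tsum (h : Represents p a T) (x : lpSeq p) (i : ℕ) :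
    T x i = ∑' j, a i j * x j := (h x i).tsum_eq.symm

lemma rep_abs_le (h : Represents p a T) (ha : ∀ i j, 0 ≤ a i j) (x : lpSeq p) (i : ℕ) :
    |T x i| ≤ T (absLp x) i := by
  have hsum : Summable fun j => a i j * |x j| := by
    simpa using (h (absLp x) i).summable
  have h1 : |T x i| ≤ ∑' j, |a i j| * |x j| := by
    rw [rep_tsum h]
    have hs : Summable fun j => ‖a i j * x j‖ := by
      have heq : (fun j => ‖a i j * x j‖) = fun j => a i j * |x j| := by
        funext j; rw [Real.norm_eq_abs, abs_mul, abs_of_nonneg (ha i j)]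
      rw [heq]; exact hsum
    simpa [Real.norm_eq_abs] using norm_tsum_le_tsum_norm hs
  calc |T x i| ≤ ∑' j, |a i j| * |x j| := h1
    _ = ∑' j, a i j * |x j| := by
        apply tsum_congr; intro j; rw [abs_of_nonneg (ha i j)]
    _ = T (absLp x) i := (rep_tsum h (absLp x) i).symm

lemma rep_entry_le (hp : p ≠ ∞) (h : Represents p a T) (ha : ∀ i j, 0 ≤ a i j) (i j : ℕ) :
    a i j ≤ ‖T‖ := by
  have hq := q_pos hp
  set e : lpSeq p := lp.single p j (1:ℝ) with he
  have hval : T e i = a i j := by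
    refine (h e i).unique ?_
    have : (fun j' => a i j' * e j') = (fun j' => if j' = j then a i j else 0) := by
      funext j'
      by_cases hjj : j' = j
      · subst hjj; simp [he, lp.single_apply_self]
      · simp [he, lp.single_apply_ne p j _ hjj, hjj]
    rw [this]
    exact hasSum_ite_eq j (a i j)
  have h2 : |T e i| ≤ ‖T e‖ := by
    simpa [Real.norm_eq_abs] using lp.norm_apply_le_norm p_ne_zero (T e) i
  have h3 : ‖T e‖ ≤ ‖T‖ * ‖e‖ := T.le_opNorm e
  have h4 : ‖e‖ = 1 := by
    simpa using lp.norm_single (E := fun _ : ℕ => ℝ) (p := p) (pos_iff_ne_zero.mpr p_ne_zero) j (1:ℝ)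
  calc a i j ≤ |T e i| := by rw [hval]; exact le_abs_self _
    _ ≤ ‖T‖ := by rw [h4, mul_one] at h3; exact h2.trans h3

lemma rep_dominated (hp : p ≠ ∞) {c : ℝ} (hc : 0 ≤ c)
    (ha : ∀ i j, 0 ≤ a i j) (hb : ∀ i j, 0 ≤ b i j) (hba : ∀ i j, b i j ≤ c * a i j)
    (hTa : Represents p a Ta) (hTb : Represents p b Tb) :
    ‖Tb‖ ≤ c * ‖Ta‖ := by
  refine Tb.opNorm_le_bound (by positivity) fun x => ?_
  have key : ∀ i, |Tb x i| ≤ |(c • Ta (absLp x)) i| := by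
    intro i
    have h1 : |Tb x i| ≤ Tb (absLp x) i := rep_abs_le hTb hb x i
    have h2 : Tb (absLp x) i ≤ c * Ta (absLp x) i := by
      rw [rep_tsum hTb, rep_tsum hTa, ← tsum_mul_left]
      refine Summable.tsum_le_tsum (fun j => ?_) (hTb (absLp x) i).summable ?_
      · have : b i j * |x j| ≤ (c * a i j) * |x j| :=
          mul_le_mul_of_nonneg_right (hba i j) (abs_nonneg _)
        simpa [mul_assoc] using this
      · exact ((hTa (absLp x) i).summable.mul_left c)
    have h3 : c * Ta (absLp x) i ≤ |(c • Ta (absLp x)) i| := by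
      simpa using le_abs_self (c * Ta (absLp x) i)
    exact h1.trans (h2.trans h3)
  calc ‖Tb x‖ ≤ ‖c • Ta (absLp x)‖ := norm_mono hp key
    _ ≤ c * (‖Ta‖ * ‖absLp x‖) := by
        rw [norm_smul, Real.norm_eq_abs, abs_of_nonneg hc]
        exact mul_le_mul_of_nonneg_left (Ta.le_opNorm _) hc
    _ = c * ‖Ta‖ * ‖x‖ := by rw [norm_absLp hp, mul_assoc]

lemma holder_tsum {ι : Type*} (s : Finset ι) (f : ι → ℕ → ℝ≥0∞) {w : ι → ℝ}
    (hw : ∑ i ∈ s, w i = 1) (hw0 : ∀ i ∈ s, 0 ≤ w i) :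
    ∑' n, ∏ i ∈ s, f i n ^ w i ≤ ∏ i ∈ s, (∑' n, f i n) ^ w i := by
  have := ENNReal.lintegral_prod_norm_pow_le (μ := MeasureTheory.Measure.count) s
    (f := f) (fun i _ => (measurable_of_countable (f i)).aemeasurable) hw hw0
  simpa [MeasureTheory.lintegral_count] using this

end Aux

section Part1

variable {p : ℝ≥0∞} [Fact (1 ≤ p)]

lemma norm_hadPow_mono (hp : p ≠ ∞) {a : ℕ → ℕ → ℝ} (ha : ∀ i j, 0 ≤ a i j)
    {t u : ℝ} (ht : 1 ≤ t) (htu : t ≤ u)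
    {St Su : lpSeq p →L[ℝ] lpSeq p}
    (hSt : Represents p (hadPow a t) St) (hSu : Represents p (hadPow a u) Su) :
    ‖Su‖ ≤ ‖St‖ ^ (u / t) := by
  have ht0 : 0 < t := lt_of_lt_of_le one_pos ht
  set s := u / t with hs
  have hs1 : 1 ≤ s := (one_le_div ht0).mpr htu
  have hse : s - 1 + 1 = s := by ring
  have hc0 : (0:ℝ) ≤ ‖St‖ := norm_nonneg _
  have hBnn : ∀ i j, 0 ≤ hadPow a t i j := fun i j => Real.rpow_nonneg (ha i j) t
  have hBle : ∀ i j, hadPow a t i j ≤ ‖St‖ := rep_entry_le hp hSt hBnn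
  have hUnn : ∀ i j, 0 ≤ hadPow a u i j := fun i j => Real.rpow_nonneg (ha i j) u
  have hdom : ∀ i j, hadPow a u i j ≤ ‖St‖ ^ (s - 1) * hadPow a t i j := by
    intro i j
    have hBu : hadPow a u i j = hadPow a t i j ^ s := by
      show a i j ^ u = (a i j ^ t) ^ s
      rw [← Real.rpow_mul (ha i j)]
      congr 1
      rw [hs]; field_simp
    have h1 : hadPow a t i j ^ s = hadPow a t i j ^ (s-1) * hadPow a t i j ^ (1:ℝ) := by
      rw [← Real.rpow_add' (hBnn i j) (by rw [hse]; positivity), hse]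
    rw [hBu, h1, Real.rpow_one]
    exact mul_le_mul_of_nonneg_right
      (Real.rpow_le_rpow (hBnn i j) (hBle i j) (by linarith)) (hBnn i j)
  have hmain := rep_dominated hp (Real.rpow_nonneg hc0 (s-1)) hBnn hUnn hdom hSt hSu
  calc ‖Su‖ ≤ ‖St‖ ^ (s-1) * ‖St‖ := hmain
    _ = ‖St‖ ^ s := by
        nth_rewrite 2 [← Real.rpow_one ‖St‖]
        rw [← Real.rpow_add' hc0 (by rw [hse]; positivity), hse]

lemma part1 (hp : p ≠ ∞) (m : ℕ)
    (A : Fin m → ℕ → ℕ → ℝ) (hA : ∀ k i j, 0 ≤ A k i j)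
    (S : ℝ → Fin m → lpSeq p →L[ℝ] lpSeq p)
    (hS : ∀ t : ℝ, 1 ≤ t → ∀ k, Represents p (hadPow (A k) t) (S t k)) :
    ∀ t u : ℝ, 1 ≤ t → t ≤ u →
      (∏ k, ‖S u k‖) ^ (1 / u) ≤ (∏ k, ‖S t k‖) ^ (1 / t) := by
  intro t u ht htu
  have ht0 : 0 < t := lt_of_lt_of_le one_pos ht
  have hu0 : 0 < u := lt_of_lt_of_le ht0 htu
  have hu1 : 1 ≤ u := ht.trans htu
  have hk : ∀ k, ‖S u k‖ ≤ ‖S t k‖ ^ (u / t) := fun k =>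
    norm_hadPow_mono hp (hA k) ht htu (hS t ht k) (hS u hu1 k)
  have hprod : (∏ k, ‖S u k‖) ≤ (∏ k, ‖S t k‖) ^ (u / t) := by
    rw [← Real.finset_prod_rpow _ _ (fun k _ => norm_nonneg _)]
    exact Finset.prod_le_prod (fun k _ => norm_nonneg _) (fun k _ => hk k)
  calc (∏ k, ‖S u k‖) ^ (1/u) ≤ ((∏ k, ‖S t k‖) ^ (u/t)) ^ (1/u) :=
        Real.rpow_le_rpow (Finset.prod_nonneg fun k _ => norm_nonneg _) hprod (by positivity)
    _ = (∏ k, ‖S t k‖) ^ (1/t) := by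
        rw [← Real.rpow_mul (Finset.prod_nonneg fun k _ => norm_nonneg _)]
        congr 1
        field_simp

end Part1

section Part2

variable {p : ℝ≥0∞} [Fact (1 ≤ p)]

lemma part2 (hp : p ≠ ∞) (m : ℕ) (hm : 0 < m)
    (A : Fin m → ℕ → ℕ → ℝ) (hA : ∀ k i j, 0 ≤ A k i j)
    (Sm : Fin m → lpSeq p →L[ℝ] lpSeq p)
    (hSm : ∀ k, Represents p (hadPow (A k) (m:ℝ)) (Sm k)) :
    ∃ H : lpSeq p →L[ℝ] lpSeq p, Represents p (hadProd A) H ∧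
      ‖H‖ ≤ (∏ k, ‖Sm k‖) ^ (1 / (m:ℝ)) := by
  have hm' : (0:ℝ) < m := by exact_mod_cast hm
  have hmne : (m:ℝ) ≠ 0 := ne_of_gt hm'
  have hq : 0 < p.toReal := q_pos hp
  set q : ℝ := p.toReal with hqdef
  set N : ℝ := (∏ k, ‖Sm k‖) ^ (1 / (m:ℝ)) with hN
  have hN0 : 0 ≤ N := Real.rpow_nonneg (Finset.prod_nonneg fun k _ => norm_nonneg _) _
  set B : Fin m → ℕ → ℕ → ℝ := fun k => hadPow (A k) (m:ℝ) with hB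
  have hBnn : ∀ k i j, 0 ≤ B k i j := fun k i j => Real.rpow_nonneg (hA k i j) _
  have hProdnn : ∀ i j, 0 ≤ hadProd A i j := fun i j => Finset.prod_nonneg fun k _ => hA k i j
  -- weights for Hölder
  have hw : ∑ _k : Fin m, (1/(m:ℝ)) = 1 := by
    rw [Finset.sum_const, Finset.card_univ, Fintype.card_fin, nsmul_eq_mul, mul_one_div,
      div_self hmne]
  have hw0 : ∀ k : Fin m, k ∈ Finset.univ → (0:ℝ) ≤ 1/(m:ℝ) := fun _ _ => by positivity
  -- pointwise identity
  have hpoint : ∀ (x : lpSeq p) (i j : ℕ),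
      |hadProd A i j * x j| = ∏ k, (B k i j * |x j|) ^ (1/(m:ℝ)) := by
    intro x i j
    have h1 : ∀ k : Fin m, (B k i j * |x j|) ^ (1/(m:ℝ))
        = A k i j * |x j| ^ (1/(m:ℝ)) := by
      intro k
      rw [Real.mul_rpow (hBnn k i j) (abs_nonneg _)]
      congr 1
      show (A k i j ^ (m:ℝ)) ^ (1/(m:ℝ)) = A k i j
      rw [← Real.rpow_mul (hA k i j), mul_one_div, div_self hmne, Real.rpow_one]
    calc |hadProd A i j * x j| = hadProd A i j * |x j| := by
          rw [abs_mul, abs_of_nonneg (hProdnn i j)]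
      _ = (∏ k, A k i j) * (|x j| ^ (1/(m:ℝ))) ^ (m:ℕ) := by
          show hadProd A i j * |x j| = _
          unfold hadProd
          congr 1
          rw [← Real.rpow_natCast (|x j| ^ (1/(m:ℝ))) m, ← Real.rpow_mul (abs_nonneg _),
            one_div_mul_cancel hmne, Real.rpow_one]
      _ = ∏ k, (A k i j * |x j| ^ (1/(m:ℝ))) := by
          rw [Finset.prod_mul_distrib, Finset.prod_const, Finset.card_univ, Fintype.card_fin]
      _ = ∏ k, (B k i j * |x j|) ^ (1/(m:ℝ)) :=
          Finset.prod_congr rfl fun k _ => (h1 k).symm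
  -- row bound
  have hGnn : ∀ (x : lpSeq p) (k : Fin m) (i : ℕ), 0 ≤ Sm k (absLp x) i := by
    intro x k i
    rw [rep_tsum (hSm k)]
    exact tsum_nonneg fun j => mul_nonneg (hBnn k i j) (abs_nonneg _)
  have hrow : ∀ (x : lpSeq p) (i : ℕ),
      ∑' j, ENNReal.ofReal |hadProd A i j * x j|
        ≤ ∏ k, ENNReal.ofReal (Sm k (absLp x) i) ^ (1/(m:ℝ)) := by
    intro x i
    have hterm : ∀ j, ENNReal.ofReal |hadProd A i j * x j|
        = ∏ k, ENNReal.ofReal (B k i j * |x j|) ^ (1/(m:ℝ)) := by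
      intro j
      rw [hpoint x i j, ENNReal.ofReal_prod_of_nonneg
        (fun k _ => Real.rpow_nonneg (mul_nonneg (hBnn k i j) (abs_nonneg _)) _)]
      exact Finset.prod_congr rfl fun k _ =>
        (ENNReal.ofReal_rpow_of_nonneg (mul_nonneg (hBnn k i j) (abs_nonneg _))
          (by positivity)).symm
    have htsum_eq : ∀ k : Fin m, (∑' j, ENNReal.ofReal (B k i j * |x j|))
        = ENNReal.ofReal (Sm k (absLp x) i) := by
      intro k
      have hsum : Summable fun j => B k i j * |x j| := by
        simpa using (hSm k (absLp x) i).summable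
      rw [← ENNReal.ofReal_tsum_of_nonneg (fun j => mul_nonneg (hBnn k i j) (abs_nonneg _)) hsum]
      congr 1
      rw [rep_tsum (hSm k)]
      rfl
    calc ∑' j, ENNReal.ofReal |hadProd A i j * x j|
        = ∑' j, ∏ k, ENNReal.ofReal (B k i j * |x j|) ^ (1/(m:ℝ)) := tsum_congr hterm
      _ ≤ ∏ k, (∑' j, ENNReal.ofReal (B k i j * |x j|)) ^ (1/(m:ℝ)) :=
          holder_tsum Finset.univ _ hw hw0
      _ = ∏ k, ENNReal.ofReal (Sm k (absLp x) i) ^ (1/(m:ℝ)) :=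
          Finset.prod_congr rfl fun k _ => by rw [htsum_eq k]
  have hrow_ne_top : ∀ (x : lpSeq p) (i : ℕ),
      (∏ k, ENNReal.ofReal (Sm k (absLp x) i) ^ (1/(m:ℝ))) ≠ ⊤ :=
    fun x i => ENNReal.prod_ne_top fun k _ =>
      ENNReal.rpow_ne_top_of_nonneg (by positivity) ENNReal.ofReal_ne_top
  have hsummable_abs : ∀ (x : lpSeq p) (i : ℕ), Summable fun j => |hadProd A i j * x j| := by
    intro x i
    have h1 : ∑' j, ENNReal.ofReal |hadProd A i j * x j| ≠ ⊤ :=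
      ne_top_of_le_ne_top (hrow_ne_top x i) (hrow x i)
    have h2 := ENNReal.summable_toReal h1
    have h3 : (fun j => (ENNReal.ofReal |hadProd A i j * x j|).toReal)
        = fun j => |hadProd A i j * x j| :=
      funext fun j => ENNReal.toReal_ofReal (abs_nonneg _)
    rwa [h3] at h2
  have hsummable : ∀ (x : lpSeq p) (i : ℕ), Summable fun j => hadProd A i j * x j :=
    fun x i => summable_abs_iff.mp (hsummable_abs x i)
  -- column bound
  have hcol : ∀ x : lpSeq p,
      ∑' i, ENNReal.ofReal (|∑' j, hadProd A i j * x j| ^ q)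
        ≤ ENNReal.ofReal ((N * ‖x‖) ^ q) := by
    intro x
    have hterm : ∀ i, ENNReal.ofReal (|∑' j, hadProd A i j * x j| ^ q)
        ≤ ∏ k, (ENNReal.ofReal (Sm k (absLp x) i) ^ q) ^ (1/(m:ℝ)) := by
      intro i
      have habs : ENNReal.ofReal |∑' j, hadProd A i j * x j|
          ≤ ∏ k, ENNReal.ofReal (Sm k (absLp x) i) ^ (1/(m:ℝ)) := by
        have h2 : |∑' j, hadProd A i j * x j| ≤ ∑' j, |hadProd A i j * x j| := by
          have heq : (fun j => ‖hadProd A i j * x j‖) = fun j => |hadProd A i j * x j| :=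
            funext fun j => Real.norm_eq_abs _
          have h2' := norm_tsum_le_tsum_norm (f := fun j => hadProd A i j * x j)
            (heq ▸ hsummable_abs x i)
          rw [Real.norm_eq_abs, heq] at h2'
          exact h2'
        calc ENNReal.ofReal |∑' j, hadProd A i j * x j|
            ≤ ENNReal.ofReal (∑' j, |hadProd A i j * x j|) := ENNReal.ofReal_le_ofReal h2
          _ = ∑' j, ENNReal.ofReal |hadProd A i j * x j| :=
              ENNReal.ofReal_tsum_of_nonneg (fun j => abs_nonneg _) (hsummable_abs x i)
          _ ≤ _ := hrow x i
      have hpow := ENNReal.rpow_le_rpow habs hq.le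
      have hlhs : ENNReal.ofReal |∑' j, hadProd A i j * x j| ^ q
          = ENNReal.ofReal (|∑' j, hadProd A i j * x j| ^ q) :=
        ENNReal.ofReal_rpow_of_nonneg (abs_nonneg _) hq.le
      have hrhs : (∏ k, ENNReal.ofReal (Sm k (absLp x) i) ^ (1/(m:ℝ))) ^ q
          = ∏ k, (ENNReal.ofReal (Sm k (absLp x) i) ^ q) ^ (1/(m:ℝ)) := by
        rw [← ENNReal.prod_rpow_of_nonneg hq.le]
        exact Finset.prod_congr rfl fun k _ => by
          rw [← ENNReal.rpow_mul, mul_comm, ENNReal.rpow_mul]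
      rw [hlhs, hrhs] at hpow
      exact hpow
    have hnormq : ∀ k : Fin m, (∑' i, ENNReal.ofReal (Sm k (absLp x) i) ^ q)
        = ENNReal.ofReal (‖Sm k (absLp x)‖ ^ q) := by
      intro k
      have hsum2 : Summable fun i => (Sm k (absLp x) i) ^ q := by
        have := (lp.memℓp (Sm k (absLp x))).summable hq
        have heq : (fun i => ‖Sm k (absLp x) i‖ ^ p.toReal)
            = fun i => (Sm k (absLp x) i) ^ q := by
          funext i; rw [Real.norm_eq_abs, abs_of_nonneg (hGnn x k i)]
        rwa [heq] at this
      calc ∑' i, ENNReal.ofReal (Sm k (absLp x) i) ^ q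
          = ∑' i, ENNReal.ofReal ((Sm k (absLp x) i) ^ q) :=
            tsum_congr fun i => ENNReal.ofReal_rpow_of_nonneg (hGnn x k i) hq.le
        _ = ENNReal.ofReal (∑' i, (Sm k (absLp x) i) ^ q) :=
            (ENNReal.ofReal_tsum_of_nonneg (fun i => Real.rpow_nonneg (hGnn x k i) _) hsum2).symm
        _ = ENNReal.ofReal (‖Sm k (absLp x)‖ ^ q) := by
            rw [lp.norm_rpow_eq_tsum hq]
            congr 1
            exact tsum_congr fun i => by rw [Real.norm_eq_abs, abs_of_nonneg (hGnn x k i)]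
    have hreal : ∏ k, (‖Sm k (absLp x)‖ ^ q) ^ (1/(m:ℝ)) ≤ (N * ‖x‖) ^ q := by
      have hcle : ∀ k : Fin m, ‖Sm k (absLp x)‖ ≤ ‖Sm k‖ * ‖x‖ := by
        intro k
        have := (Sm k).le_opNorm (absLp x)
        rwa [norm_absLp hp] at this
      have step1 : ∀ k : Fin m, (‖Sm k (absLp x)‖ ^ q) ^ (1/(m:ℝ))
          = ‖Sm k (absLp x)‖ ^ (q/(m:ℝ)) := by
        intro k
        rw [← Real.rpow_mul (norm_nonneg _), mul_one_div]
      have step2 : ∏ k, ‖Sm k (absLp x)‖ ^ (q/(m:ℝ))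
          ≤ ∏ k, (‖Sm k‖ * ‖x‖) ^ (q/(m:ℝ)) := by
        refine Finset.prod_le_prod (fun k _ => Real.rpow_nonneg (norm_nonneg _) _)
          (fun k _ => Real.rpow_le_rpow (norm_nonneg _) (hcle k) (by positivity))
      have step3 : ∏ k, (‖Sm k‖ * ‖x‖) ^ (q/(m:ℝ)) = (N * ‖x‖) ^ q := by
        rw [Real.finset_prod_rpow _ _ (fun k _ => mul_nonneg (norm_nonneg _) (norm_nonneg _)),
          Finset.prod_mul_distrib, Finset.prod_const, Finset.card_univ, Fintype.card_fin]
        rw [Real.mul_rpow (Finset.prod_nonneg fun k _ => norm_nonneg _) (by positivity)]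
        rw [Real.mul_rpow hN0 (norm_nonneg _)]
        congr 1
        · rw [hN, ← Real.rpow_mul (Finset.prod_nonneg fun k _ => norm_nonneg _)]
          congr 1
          field_simp
        · rw [← Real.rpow_natCast ‖x‖ m, ← Real.rpow_mul (norm_nonneg _)]
          congr 1
          field_simp
      calc ∏ k, (‖Sm k (absLp x)‖ ^ q) ^ (1/(m:ℝ))
          = ∏ k, ‖Sm k (absLp x)‖ ^ (q/(m:ℝ)) := Finset.prod_congr rfl fun k _ => step1 k
        _ ≤ ∏ k, (‖Sm k‖ * ‖x‖) ^ (q/(m:ℝ)) := step2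
        _ = (N * ‖x‖) ^ q := step3
    calc ∑' i, ENNReal.ofReal (|∑' j, hadProd A i j * x j| ^ q)
        ≤ ∑' i, ∏ k, (ENNReal.ofReal (Sm k (absLp x) i) ^ q) ^ (1/(m:ℝ)) :=
          ENNReal.tsum_le_tsum hterm
      _ ≤ ∏ k, (∑' i, ENNReal.ofReal (Sm k (absLp x) i) ^ q) ^ (1/(m:ℝ)) :=
          holder_tsum Finset.univ _ hw hw0
      _ = ∏ k, ENNReal.ofReal (‖Sm k (absLp x)‖ ^ q) ^ (1/(m:ℝ)) :=
          Finset.prod_congr rfl fun k _ => by rw [hnormq k]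
      _ = ENNReal.ofReal (∏ k, (‖Sm k (absLp x)‖ ^ q) ^ (1/(m:ℝ))) := by
          rw [ENNReal.ofReal_prod_of_nonneg
            (fun k _ => Real.rpow_nonneg (Real.rpow_nonneg (norm_nonneg _) _) _)]
          exact Finset.prod_congr rfl fun k _ =>
            ENNReal.ofReal_rpow_of_nonneg (Real.rpow_nonneg (norm_nonneg _) _) (by positivity)
      _ ≤ ENNReal.ofReal ((N * ‖x‖) ^ q) := ENNReal.ofReal_le_ofReal hreal
  -- memℓp and norm bound
  have hmem : ∀ x : lpSeq p, Memℓp (fun i => ∑' j, hadProd A i j * x j) p := by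
    intro x
    apply memℓp_gen
    have h1 : ∑' i, ENNReal.ofReal (|∑' j, hadProd A i j * x j| ^ q) ≠ ⊤ :=
      ne_top_of_le_ne_top ENNReal.ofReal_ne_top (hcol x)
    have h2 := ENNReal.summable_toReal h1
    have h3 : (fun i => (ENNReal.ofReal (|∑' j, hadProd A i j * x j| ^ q)).toReal)
        = fun i => |∑' j, hadProd A i j * x j| ^ q :=
      funext fun i => ENNReal.toReal_ofReal (Real.rpow_nonneg (abs_nonneg _) _)
    rw [h3] at h2
    have h4 : (fun i => ‖∑' j, hadProd A i j * x j‖ ^ p.toReal)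
        = fun i => |∑' j, hadProd A i j * x j| ^ q := by
      funext i; rw [Real.norm_eq_abs]
    rwa [h4]
  have htsum_le : ∀ x : lpSeq p,
      ∑' i, |∑' j, hadProd A i j * x j| ^ q ≤ (N * ‖x‖) ^ q := by
    intro x
    have hsum' : Summable fun i => |∑' j, hadProd A i j * x j| ^ q := by
      have := (hmem x).summable hq
      have h4 : (fun i => ‖∑' j, hadProd A i j * x j‖ ^ p.toReal)
          = fun i => |∑' j, hadProd A i j * x j| ^ q := by
        funext i; rw [Real.norm_eq_abs]
      rwa [h4] at this
    have h1 := hcol x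
    rw [← ENNReal.ofReal_tsum_of_nonneg (fun i => Real.rpow_nonneg (abs_nonneg _) _) hsum'] at h1
    exact (ENNReal.ofReal_le_ofReal_iff (by positivity)).mp h1
  -- build the operator
  let Hfun : lpSeq p → lpSeq p := fun x => ⟨fun i => ∑' j, hadProd A i j * x j, hmem x⟩
  have hadd : ∀ x z : lpSeq p, Hfun (x + z) = Hfun x + Hfun z := by
    intro x z
    refine lp.ext (funext fun i => ?_)
    have h1 : ∀ j, hadProd A i j * (x + z) j
        = hadProd A i j * x j + hadProd A i j * z j := by
      intro j
      rw [lp.coeFn_add, Pi.add_apply]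
      ring
    calc Hfun (x + z) i = ∑' j, (hadProd A i j * x j + hadProd A i j * z j) := tsum_congr h1
      _ = (∑' j, hadProd A i j * x j) + ∑' j, hadProd A i j * z j :=
          Summable.tsum_add (hsummable x i) (hsummable z i)
      _ = (Hfun x + Hfun z) i := by rw [lp.coeFn_add, Pi.add_apply]
  have hsmul : ∀ (c : ℝ) (x : lpSeq p), Hfun (c • x) = c • Hfun x := by
    intro c x
    refine lp.ext (funext fun i => ?_)
    have h1 : ∀ j, hadProd A i j * (c • x) j = c * (hadProd A i j * x j) := by
      intro j
      rw [lp.coeFn_smul, Pi.smul_apply, smul_eq_mul]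
      ring
    calc Hfun (c • x) i = ∑' j, c * (hadProd A i j * x j) := tsum_congr h1
      _ = c * ∑' j, hadProd A i j * x j := tsum_mul_left
      _ = (c • Hfun x) i := by rw [lp.coeFn_smul, Pi.smul_apply, smul_eq_mul]
  let Hlin : lpSeq p →ₗ[ℝ] lpSeq p :=
    { toFun := Hfun, map_add' := hadd, map_smul' := hsmul }
  have hbound : ∀ x, ‖Hlin x‖ ≤ N * ‖x‖ := by
    intro x
    apply lp.norm_le_of_tsum_le hq (by positivity)
    have h4 : (fun i => ‖(Hlin x) i‖ ^ p.toReal)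
        = fun i => |∑' j, hadProd A i j * x j| ^ q := by
      funext i; rw [Real.norm_eq_abs]; rfl
    rw [h4]
    exact htsum_le x
  refine ⟨Hlin.mkContinuous N hbound, ?_, ?_⟩
  · intro x i
    exact (hsummable x i).hasSum
  · exact Hlin.mkContinuous_norm_le hN0 hbound

end Part2

/-- `N(t) = (‖A₁^{(t)}‖⋯‖A_m^{(t)}‖)^{1/t}` is non-increasing on `[1,∞)`,
and `‖A₁∘⋯∘A_m‖ ≤ N(t)` for every `t ∈ [1,m]`. -/
theorem norm_hadamard_pow_function_decreasing
    (p : ℝ≥0∞) [Fact (1 ≤ p)] (hp : p ≠ ∞) (m : ℕ) (hm : 0 < m)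
    (A : Fin m → ℕ → ℕ → ℝ) (hA : ∀ k i j, 0 ≤ A k i j)
    (T : Fin m → lpSeq p →L[ℝ] lpSeq p) (hT : ∀ k, Represents p (A k) (T k))
    (S : ℝ → Fin m → lpSeq p →L[ℝ] lpSeq p)
    (hS : ∀ t : ℝ, 1 ≤ t → ∀ k, Represents p (hadPow (A k) t) (S t k)) :
    (∀ t u : ℝ, 1 ≤ t → t ≤ u →
      (∏ k, ‖S u k‖) ^ (1 / u) ≤ (∏ k, ‖S t k‖) ^ (1 / t)) ∧
    ∃ H : lpSeq p →L[ℝ] lpSeq p,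
      Represents p (hadProd A) H ∧
      ∀ t : ℝ, 1 ≤ t → t ≤ m → ‖H‖ ≤ (∏ k, ‖S t k‖) ^ (1 / t) := by
  have ht1m : (1:ℝ) ≤ (m:ℝ) := by exact_mod_cast hm
  have hpart1 := part1 hp m A hA S hS
  refine ⟨hpart1, ?_⟩
  obtain ⟨H, hrep, hHle⟩ := part2 hp m hm A hA (S (m:ℝ)) (hS (m:ℝ) ht1m)
  refine ⟨H, hrep, ?_⟩
  intro t ht htm
  exact hHle.trans (hpart1 t (m:ℝ) ht htm)
end
end

section
/- Let A_1, ..., A_m be n×n matrices with non-negative real entries, and define r(t) = (ρ(A_1^{(t)}) ρ(A_2^{(t)}) ⋯ ρ(A_m^{(t)}))^{1/t} and N(t) = (‖A_1^{(t)}‖ ‖A_2^{(t)}‖ ⋯ ‖A_m^{(t)}‖)^{1/t} for t > 0, where ‖·‖ is the operator norm with respect to the Euclidean norm on ℂⁿ. Then r and N are decreasing (non-increasing) functions on (0, ∞); moreover ρ(A_1 ∘ A_2 ∘ ⋯ ∘ A_m) ≤ r(t) and ‖A_1 ∘ A_2 ∘ ⋯ ∘ A_m‖ ≤ N(t) for every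 t ∈ (0, m]. -/
open scoped ENNReal NNReal BigOperators

noncomputable section

/-- Entrywise (Hadamard) power `A^{(t)}` of a real square matrix. -/
def matHadPow {n : ℕ} (a : Matrix (Fin n) (Fin n) ℝ) (t : ℝ) : Matrix (Fin n) (Fin n) ℝ :=
  Matrix.of fun i j => a i j ^ t

/-- Hadamard (entrywise) product of a finite family of real square matrices. -/
def matHadProd {n m : ℕ} (A : Fin m → Matrix (Fin n) (Fin n) ℝ) : Matrix (Fin n) (Fin n) ℝ :=
  Matrix.of fun i j => ∏ k, A k i j

/-- The bounded operator on the Euclidean space `ℂⁿ` induced by a real `n × n` matrix. -/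
def euclOp {n : ℕ} (a : Matrix (Fin n) (Fin n) ℝ) :
    EuclideanSpace ℂ (Fin n) →L[ℂ] EuclideanSpace ℂ (Fin n) :=
  Matrix.toEuclideanCLM (𝕜 := ℂ) (a.map Complex.ofReal)


variable {n : ℕ}

/-- make a complex Euclidean vector from a real vector -/
def rvec (v : Fin n → ℝ) : EuclideanSpace ℂ (Fin n) :=
  (WithLp.equiv 2 _).symm (fun j => (v j : ℂ))

lemma euclOp_apply (a : Matrix (Fin n) (Fin n) ℝ) (x : EuclideanSpace ℂ (Fin n)) (i : Fin n) :
    euclOp a x i = ∑ j, (a i j : ℂ) * x j := by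
  have := Matrix.ofLp_toEuclideanCLM (𝕜 := ℂ) (a.map Complex.ofReal) x
  have h2 : euclOp a x = (WithLp.equiv 2 _).symm
      (Matrix.toLin' (a.map Complex.ofReal) (WithLp.equiv 2 _ x)) := by
    rw [euclOp]; rfl
  rw [h2]
  simp [Matrix.toLin'_apply, Matrix.mulVec, dotProduct, WithLp.equiv, Matrix.map]

lemma eucl_norm_sq (x : EuclideanSpace ℂ (Fin n)) : ‖x‖ ^ 2 = ∑ i, ‖x i‖ ^ 2 := by
  rw [EuclideanSpace.norm_eq, Real.sq_sqrt (by positivity)]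

lemma norm_rvec_sq (v : Fin n → ℝ) : ‖rvec v‖ ^ 2 = ∑ j, v j ^ 2 := by
  rw [eucl_norm_sq]
  refine Finset.sum_congr rfl fun j _ => ?_
  have : (rvec v) j = (v j : ℂ) := rfl
  rw [this, Complex.norm_real]; rw [Real.norm_eq_abs, sq_abs]

example : True := trivial

/-- KEY: Euclidean image of a real vector bounded by operator norm, squared form. -/
lemma key_sq (M : Matrix (Fin n) (Fin n) ℝ) (v : Fin n → ℝ) :
    ∑ i, (∑ j, M i j * v j) ^ 2 ≤ ‖euclOp M‖ ^ 2 * ∑ j, v j ^ 2 := by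
  have h1 : ∀ i, (euclOp M (rvec v)) i = ((∑ j, M i j * v j : ℝ) : ℂ) := by
    intro i
    rw [euclOp_apply]
    push_cast
    refine Finset.sum_congr rfl fun j _ => ?_
    congr 1
  have h2 : ‖euclOp M (rvec v)‖ ^ 2 = ∑ i, (∑ j, M i j * v j) ^ 2 := by
    rw [eucl_norm_sq]
    refine Finset.sum_congr rfl fun i _ => ?_
    rw [h1 i, Complex.norm_real, Real.norm_eq_abs, sq_abs]
  calc ∑ i, (∑ j, M i j * v j) ^ 2 = ‖euclOp M (rvec v)‖ ^ 2 := h2.symm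
    _ ≤ (‖euclOp M‖ * ‖rvec v‖) ^ 2 := by
        have := (euclOp M).le_opNorm (rvec v)
        exact pow_le_pow_left₀ (norm_nonneg _) this 2
    _ = ‖euclOp M‖ ^ 2 * ∑ j, v j ^ 2 := by rw [mul_pow, norm_rvec_sq]

/-- KEY2: operator norm bound from action on non-negative real vectors. -/
lemma opNorm_le_of_nonneg_vec (C : Matrix (Fin n) (Fin n) ℝ) (c : ℝ) (hc : 0 ≤ c)
    (hC : ∀ i j, 0 ≤ C i j)
    (h : ∀ v : Fin n → ℝ, (∀ j, 0 ≤ v j) →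
      ∑ i, (∑ j, C i j * v j) ^ 2 ≤ c ^ 2 * ∑ j, v j ^ 2) :
    ‖euclOp C‖ ≤ c := by
  refine (euclOp C).opNorm_le_bound hc fun x => ?_
  set v : Fin n → ℝ := fun j => ‖x j‖ with hv
  have hvn : ∀ j, 0 ≤ v j := fun j => norm_nonneg _
  have hx : ‖x‖ ^ 2 = ∑ j, v j ^ 2 := eucl_norm_sq x
  have hCx : ‖euclOp C x‖ ^ 2 ≤ ∑ i, (∑ j, C i j * v j) ^ 2 := by
    rw [eucl_norm_sq]
    refine Finset.sum_le_sum fun i _ => ?_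
    rw [euclOp_apply]
    refine pow_le_pow_left₀ (norm_nonneg _) ?_ 2
    calc ‖∑ j, (C i j : ℂ) * x j‖ ≤ ∑ j, ‖(C i j : ℂ) * x j‖ := norm_sum_le _ _
      _ = ∑ j, C i j * v j := by
          refine Finset.sum_congr rfl fun j _ => ?_
          rw [norm_mul, Complex.norm_real, Real.norm_eq_abs, abs_of_nonneg (hC i j)]
  have h2 := (h v hvn).trans_eq (by rw [← hx])
  have : ‖euclOp C x‖ ^ 2 ≤ (c * ‖x‖) ^ 2 := by
    rw [mul_pow]
    exact hCx.trans h2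
  have hb : 0 ≤ c * ‖x‖ := mul_nonneg hc (norm_nonneg _)
  nlinarith [norm_nonneg (euclOp C x)]

/-- E: entrywise domination of non-negative matrices gives operator norm domination. -/
lemma opNorm_le_opNorm_of_le (a b : Matrix (Fin n) (Fin n) ℝ)
    (ha : ∀ i j, 0 ≤ a i j) (hab : ∀ i j, a i j ≤ b i j) :
    ‖euclOp a‖ ≤ ‖euclOp b‖ := by
  refine opNorm_le_of_nonneg_vec a _ (norm_nonneg _) ha fun v hv => ?_
  refine le_trans ?_ (key_sq b v)
  refine Finset.sum_le_sum fun i _ => ?_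
  have h1 : 0 ≤ ∑ j, a i j * v j :=
    Finset.sum_nonneg fun j _ => mul_nonneg (ha i j) (hv j)
  refine pow_le_pow_left₀ h1 ?_ 2
  exact Finset.sum_le_sum fun j _ => mul_le_mul_of_nonneg_right (hab i j) (hv j)

/-- P3: each entry is at most the operator norm. -/
lemma entry_le_opNorm (a : Matrix (Fin n) (Fin n) ℝ) (ha : ∀ i j, 0 ≤ a i j) (i j : Fin n) :
    a i j ≤ ‖euclOp a‖ := by
  have := key_sq a (fun l => if l = j then 1 else 0)
  have hsum : ∑ l, (if l = j then (1:ℝ) else 0) ^ 2 = 1 := by simp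
  rw [hsum, mul_one] at this
  have hcol : ∀ i', ∑ l, a i' l * (if l = j then (1:ℝ) else 0) = a i' j := by
    intro i'; simp
  have h1 : a i j ^ 2 ≤ ∑ i', (∑ l, a i' l * (if l = j then (1:ℝ) else 0)) ^ 2 := by
    refine Finset.single_le_sum (f := fun i' => (∑ l, a i' l * (if l = j then (1:ℝ) else 0)) ^ 2)
      (fun i' _ => sq_nonneg _) (Finset.mem_univ i) |>.trans_eq' ?_
    rw [hcol i]
  have h2 : a i j ^ 2 ≤ ‖euclOp a‖ ^ 2 := h1.trans this
  nlinarith [norm_nonneg (euclOp a), ha i j]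

/-- Finite Hölder: for non-negative `f k i` and `m` equal weights `1/m`. -/
lemma holder_sum {m : ℕ} (hm : 0 < m) {ι : Type*} (s : Finset ι)
    (f : Fin m → ι → ℝ) (hf : ∀ k i, 0 ≤ f k i) :
    ∑ i ∈ s, ∏ k, f k i ^ (1 / m : ℝ) ≤ ∏ k, (∑ i ∈ s, f k i) ^ (1 / m : ℝ) := by
  have hw : (0:ℝ) < 1 / m := by positivity
  by_cases hzero : ∃ k, ∑ i ∈ s, f k i = 0
  · obtain ⟨k0, hk0⟩ := hzero
    have hfk0 : ∀ i ∈ s, f k0 i = 0 := by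
      intro i hi
      exact (Finset.sum_eq_zero_iff_of_nonneg (fun i _ => hf k0 i)).mp hk0 i hi
    have hL : ∑ i ∈ s, ∏ k, f k i ^ (1 / m : ℝ) = 0 := by
      refine Finset.sum_eq_zero fun i hi => ?_
      refine Finset.prod_eq_zero (Finset.mem_univ k0) ?_
      rw [hfk0 i hi, Real.zero_rpow (ne_of_gt hw)]
    have hR : ∏ k, (∑ i ∈ s, f k i) ^ (1 / m : ℝ) = 0 := by
      refine Finset.prod_eq_zero (Finset.mem_univ k0) ?_
      rw [hk0, Real.zero_rpow (ne_of_gt hw)]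
    rw [hL, hR]
  · push_neg at hzero
    set S : Fin m → ℝ := fun k => ∑ i ∈ s, f k i with hS
    have hSpos : ∀ k, 0 < S k := fun k =>
      lt_of_le_of_ne (Finset.sum_nonneg fun i _ => hf k i) (Ne.symm (hzero k))
    have hsumw : ∑ _k : Fin m, (1 / m : ℝ) = 1 := by
      rw [Finset.sum_const, Finset.card_univ, Fintype.card_fin, nsmul_eq_mul]
      field_simp
    have key : ∀ i ∈ s, ∏ k, f k i ^ (1 / m : ℝ) ≤
        (∏ k, S k ^ (1 / m : ℝ)) * ∑ k, (1 / m : ℝ) * (f k i / S k) := by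
      intro i hi
      have hsplit : ∀ k, f k i ^ (1 / m : ℝ) = S k ^ (1 / m : ℝ) * (f k i / S k) ^ (1 / m : ℝ) := by
        intro k
        rw [← Real.mul_rpow (le_of_lt (hSpos k)) (div_nonneg (hf k i) (le_of_lt (hSpos k)))]
        rw [mul_div_assoc', mul_comm, mul_div_assoc, div_self (ne_of_gt (hSpos k)), mul_one]
      calc ∏ k, f k i ^ (1 / m : ℝ)
          = (∏ k, S k ^ (1 / m : ℝ)) * ∏ k, (f k i / S k) ^ (1 / m : ℝ) := by
            rw [← Finset.prod_mul_distrib]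
            exact Finset.prod_congr rfl fun k _ => hsplit k
        _ ≤ (∏ k, S k ^ (1 / m : ℝ)) * ∑ k, (1 / m : ℝ) * (f k i / S k) := by
            refine mul_le_mul_of_nonneg_left ?_ ?_
            · exact Real.geom_mean_le_arith_mean_weighted Finset.univ _ _
                (fun k _ => le_of_lt hw) hsumw
                (fun k _ => div_nonneg (hf k i) (le_of_lt (hSpos k)))
            · exact Finset.prod_nonneg fun k _ => Real.rpow_nonneg (le_of_lt (hSpos k)) _
    calc ∑ i ∈ s, ∏ k, f k i ^ (1 / m : ℝ)
        ≤ ∑ i ∈ s, (∏ k, S k ^ (1 / m : ℝ)) * ∑ k, (1 / m : ℝ) * (f k i / S k) :=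
          Finset.sum_le_sum key
      _ = (∏ k, S k ^ (1 / m : ℝ)) * ∑ k, (1 / m : ℝ) * (S k / S k) := by
          rw [← Finset.mul_sum]
          congr 1
          rw [Finset.sum_comm]
          refine Finset.sum_congr rfl fun k _ => ?_
          rw [← Finset.mul_sum, ← Finset.sum_div]
      _ = ∏ k, S k ^ (1 / m : ℝ) := by
          have : ∀ k : Fin m, (1 / m : ℝ) * (S k / S k) = 1 / m := by
            intro k; rw [div_self (ne_of_gt (hSpos k)), mul_one]
          rw [Finset.sum_congr rfl fun k _ => this k, hsumw, mul_one]

/-- superadditivity of rpow with exponent ≥ 1 over a finset -/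
lemma sum_rpow_le_rpow_sum {ι : Type*} (s : Finset ι) (f : ι → ℝ) (hf : ∀ i ∈ s, 0 ≤ f i)
    {p : ℝ} (hp : 1 ≤ p) : ∑ i ∈ s, f i ^ p ≤ (∑ i ∈ s, f i) ^ p := by
  classical
  induction s using Finset.induction with
  | empty => simp [Real.zero_rpow (by linarith : p ≠ 0)]
  | insert _ _ hnot ih =>
    rename_i a t
    rw [Finset.sum_insert hnot, Finset.sum_insert hnot]
    have h1 : ∑ i ∈ t, f i ^ p ≤ (∑ i ∈ t, f i) ^ p :=
      ih fun i hi => hf i (Finset.mem_insert_of_mem hi)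
    have ha : 0 ≤ f a := hf a (Finset.mem_insert_self a t)
    have ht : 0 ≤ ∑ i ∈ t, f i := Finset.sum_nonneg fun i hi => hf i (Finset.mem_insert_of_mem hi)
    have h2 : f a ^ p + (∑ i ∈ t, f i) ^ p ≤ (f a + ∑ i ∈ t, f i) ^ p := by
      have := NNReal.add_rpow_le_rpow_add ⟨f a, ha⟩ ⟨∑ i ∈ t, f i, ht⟩ hp
      have hc := NNReal.coe_le_coe.mpr this
      push_cast [NNReal.coe_rpow] at hc
      exact hc
    linarith

/-- H: operator norm of a weighted-geometric-mean matrix. -/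
lemma opNorm_geom_mean_le {m : ℕ} (hm : 0 < m) (D : Fin m → Matrix (Fin n) (Fin n) ℝ)
    (hD : ∀ k i j, 0 ≤ D k i j) :
    ‖euclOp (Matrix.of fun i j => ∏ k, D k i j ^ (1 / m : ℝ))‖ ≤
      ∏ k, ‖euclOp (D k)‖ ^ (1 / m : ℝ) := by
  set C : Matrix (Fin n) (Fin n) ℝ := Matrix.of fun i j => ∏ k, D k i j ^ (1 / m : ℝ) with hCdef
  have hCnn : ∀ i j, 0 ≤ C i j := by
    intro i j
    show (0:ℝ) ≤ ∏ k, D k i j ^ (1 / m : ℝ)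
    exact Finset.prod_nonneg fun k _ => Real.rpow_nonneg (hD k i j) _
  have hw : (0:ℝ) ≤ 1 / m := by positivity
  have hc : (0:ℝ) ≤ ∏ k, ‖euclOp (D k)‖ ^ (1 / m : ℝ) :=
    Finset.prod_nonneg fun k _ => Real.rpow_nonneg (norm_nonneg _) _
  refine opNorm_le_of_nonneg_vec C _ hc hCnn fun v hv => ?_
  -- step 1 : (C v)_i ≤ ∏_k ((D_k v)_i)^{1/m}
  have step1 : ∀ i, ∑ j, C i j * v j ≤ ∏ k, (∑ j, D k i j * v j) ^ (1 / m : ℝ) := by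
    intro i
    have : ∀ j, C i j * v j = ∏ k, (D k i j * v j) ^ (1 / m : ℝ) := by
      intro j
      have hv1 : v j = ∏ _k : Fin m, v j ^ (1 / m : ℝ) := by
        rw [Finset.prod_const, Finset.card_univ, Fintype.card_fin,
          ← Real.rpow_natCast (v j ^ (1 / m : ℝ)) m, ← Real.rpow_mul (hv j)]
        rw [one_div, inv_mul_cancel₀ (by exact_mod_cast hm.ne' : (m:ℝ) ≠ 0), Real.rpow_one]
      calc C i j * v j = (∏ k, D k i j ^ (1 / m : ℝ)) * ∏ _k : Fin m, v j ^ (1 / m : ℝ) := by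
            rw [← hv1]; rfl
        _ = ∏ k, (D k i j * v j) ^ (1 / m : ℝ) := by
            rw [← Finset.prod_mul_distrib]
            exact Finset.prod_congr rfl fun k _ =>
              (Real.mul_rpow (hD k i j) (hv j)).symm
    rw [Finset.sum_congr rfl fun j _ => this j]
    exact holder_sum hm Finset.univ (fun k j => D k i j * v j)
      (fun k j => mul_nonneg (hD k i j) (hv j))
  -- step 2 : sum of squares
  have step2 : ∑ i, (∑ j, C i j * v j) ^ 2 ≤ ∏ k, (∑ i, (∑ j, D k i j * v j) ^ 2) ^ (1 / m : ℝ) := by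
    have hsq : ∀ i, (∑ j, C i j * v j) ^ 2 ≤ ∏ k, ((∑ j, D k i j * v j) ^ 2) ^ (1 / m : ℝ) := by
      intro i
      have h0 : 0 ≤ ∑ j, C i j * v j :=
        Finset.sum_nonneg fun j _ => mul_nonneg (hCnn i j) (hv j)
      have h1 := pow_le_pow_left₀ h0 (step1 i) 2
      refine h1.trans_eq ?_
      rw [← Finset.prod_pow]
      refine Finset.prod_congr rfl fun k _ => ?_
      have hDk : 0 ≤ ∑ j, D k i j * v j :=
        Finset.sum_nonneg fun j _ => mul_nonneg (hD k i j) (hv j)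
      rw [← Real.rpow_natCast ((∑ j, D k i j * v j) ^ (1 / m : ℝ)) 2,
        ← Real.rpow_mul hDk, ← Real.rpow_natCast (∑ j, D k i j * v j) 2,
        ← Real.rpow_mul hDk, mul_comm]
    calc ∑ i, (∑ j, C i j * v j) ^ 2
        ≤ ∑ i, ∏ k, ((∑ j, D k i j * v j) ^ 2) ^ (1 / m : ℝ) := Finset.sum_le_sum fun i _ => hsq i
      _ ≤ ∏ k, (∑ i, (∑ j, D k i j * v j) ^ 2) ^ (1 / m : ℝ) :=
          holder_sum hm Finset.univ (fun k i => (∑ j, D k i j * v j) ^ 2)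
            (fun k i => sq_nonneg _)
  -- step 3 : apply key_sq
  refine step2.trans ?_
  calc ∏ k, (∑ i, (∑ j, D k i j * v j) ^ 2) ^ (1 / m : ℝ)
      ≤ ∏ k, (‖euclOp (D k)‖ ^ 2 * ∑ j, v j ^ 2) ^ (1 / m : ℝ) := by
        refine Finset.prod_le_prod (fun k _ => Real.rpow_nonneg
          (Finset.sum_nonneg fun i _ => sq_nonneg _) _) fun k _ => ?_
        exact Real.rpow_le_rpow (Finset.sum_nonneg fun i _ => sq_nonneg _) (key_sq (D k) v) hw
    _ = (∏ k, ‖euclOp (D k)‖ ^ (1 / m : ℝ)) ^ 2 * ∑ j, v j ^ 2 := by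
        have hvs : (0:ℝ) ≤ ∑ j, v j ^ 2 := Finset.sum_nonneg fun j _ => sq_nonneg _
        rw [Finset.prod_congr rfl fun k _ => Real.mul_rpow (sq_nonneg ‖euclOp (D k)‖) hvs,
          Finset.prod_mul_distrib]
        congr 1
        · rw [← Finset.prod_pow]
          refine Finset.prod_congr rfl fun k _ => ?_
          rw [← Real.rpow_natCast (‖euclOp (D k)‖ ^ (1/m:ℝ)) 2, ← Real.rpow_mul (norm_nonneg _),
            ← Real.rpow_natCast ‖euclOp (D k)‖ 2, ← Real.rpow_mul (norm_nonneg _), mul_comm]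
        · rw [Finset.prod_const, Finset.card_univ, Fintype.card_fin,
            ← Real.rpow_natCast ((∑ j, v j ^ 2) ^ (1/m:ℝ)) m, ← Real.rpow_mul hvs,
            one_div, inv_mul_cancel₀ (by exact_mod_cast hm.ne' : (m:ℝ) ≠ 0), Real.rpow_one]


lemma matHadPow_apply (a : Matrix (Fin n) (Fin n) ℝ) (t : ℝ) (i j : Fin n) :
    matHadPow a t i j = a i j ^ t := rfl

lemma matHadPow_nonneg {a : Matrix (Fin n) (Fin n) ℝ} (ha : ∀ i j, 0 ≤ a i j) (t : ℝ) :
    ∀ i j, 0 ≤ matHadPow a t i j := fun i j => Real.rpow_nonneg (ha i j) t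

/-- non-negativity of entries of powers -/
lemma pow_entry_nonneg {a : Matrix (Fin n) (Fin n) ℝ} (ha : ∀ i j, 0 ≤ a i j) (N : ℕ) :
    ∀ i j, 0 ≤ (a ^ N) i j := by
  induction N with
  | zero => intro i j; rw [pow_zero]; by_cases h : i = j <;>
      simp [Matrix.one_apply, h]
  | succ N ih =>
    intro i j
    rw [pow_succ, Matrix.mul_apply]
    exact Finset.sum_nonneg fun l _ => mul_nonneg (ih i l) (ha l j)

/-- monotonicity of entries of powers -/
lemma pow_entry_mono {a b : Matrix (Fin n) (Fin n) ℝ} (ha : ∀ i j, 0 ≤ a i j)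
    (hab : ∀ i j, a i j ≤ b i j) (N : ℕ) : ∀ i j, (a ^ N) i j ≤ (b ^ N) i j := by
  induction N with
  | zero => intro i j; rw [pow_zero, pow_zero]
  | succ N ih =>
    intro i j
    rw [pow_succ, pow_succ, Matrix.mul_apply, Matrix.mul_apply]
    refine Finset.sum_le_sum fun l _ => ?_
    have h1 : 0 ≤ a l j := ha l j
    have h2 : 0 ≤ (a ^ N) i l := pow_entry_nonneg ha N i l
    exact mul_le_mul (ih i l) (hab l j) h1 ((h2.trans (ih i l)))

/-- P2: `(B^{(α)})^N ≤ (B^N)^{(α)}` entrywise for `α ≥ 1`. -/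
lemma hadPow_pow_le {B : Matrix (Fin n) (Fin n) ℝ} (hB : ∀ i j, 0 ≤ B i j) {α : ℝ} (hα : 1 ≤ α)
    (N : ℕ) : ∀ i j, ((matHadPow B α) ^ N) i j ≤ matHadPow (B ^ N) α i j := by
  induction N with
  | zero =>
    intro i j
    rw [pow_zero, pow_zero, matHadPow_apply]
    by_cases h : i = j <;> simp [Matrix.one_apply, h,
      Real.one_rpow, Real.zero_rpow (by linarith : α ≠ 0)]
  | succ N ih =>
    intro i j
    rw [pow_succ, Matrix.mul_apply]
    have step : ∀ l, ((matHadPow B α) ^ N) i l * matHadPow B α l j ≤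
        ((B ^ N) i l * B l j) ^ α := by
      intro l
      have h1 : ((matHadPow B α) ^ N) i l ≤ ((B ^ N) i l) ^ α := ih i l
      have h2 : (0:ℝ) ≤ ((matHadPow B α) ^ N) i l :=
        pow_entry_nonneg (matHadPow_nonneg hB α) N i l
      calc ((matHadPow B α) ^ N) i l * matHadPow B α l j
          ≤ ((B ^ N) i l) ^ α * (B l j) ^ α := by
            exact mul_le_mul_of_nonneg_right h1 (Real.rpow_nonneg (hB l j) α) |>.trans_eq rfl
        _ = ((B ^ N) i l * B l j) ^ α :=
            (Real.mul_rpow (pow_entry_nonneg hB N i l) (hB l j)).symm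
    calc ∑ l, ((matHadPow B α) ^ N) i l * matHadPow B α l j
        ≤ ∑ l, ((B ^ N) i l * B l j) ^ α := Finset.sum_le_sum fun l _ => step l
      _ ≤ (∑ l, (B ^ N) i l * B l j) ^ α :=
          sum_rpow_le_rpow_sum Finset.univ _
            (fun l _ => mul_nonneg (pow_entry_nonneg hB N i l) (hB l j)) hα
      _ = matHadPow (B ^ (N+1)) α i j := by rw [matHadPow_apply, pow_succ, Matrix.mul_apply]

/-- euclOp is multiplicative on powers -/
lemma euclOp_pow (a : Matrix (Fin n) (Fin n) ℝ) (N : ℕ) :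
    euclOp (a ^ N) = (euclOp a) ^ N := by
  have h1 : (a ^ N).map (Complex.ofReal) = (a.map Complex.ofReal) ^ N := by
    exact map_pow ((Complex.ofRealHom.mapMatrix : Matrix (Fin n) (Fin n) ℝ →+* _)) a N
  rw [euclOp, h1, map_pow]
  rfl

lemma euclOp_smul (s : ℝ) (C : Matrix (Fin n) (Fin n) ℝ) :
    euclOp (s • C) = (s : ℂ) • euclOp C := by
  have h1 : (s • C).map Complex.ofReal = (s : ℂ) • (C.map Complex.ofReal) := by
    ext i j
    simp [Matrix.map_apply, Matrix.smul_apply, Complex.ofReal_mul]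
  rw [euclOp, h1, map_smul]
  rfl

/-- NPow: `‖A^{(α)}‖ ≤ ‖A‖^α` for `α ≥ 1` and non-negative `A`. -/
lemma opNorm_hadPow_le {C : Matrix (Fin n) (Fin n) ℝ} (hC : ∀ i j, 0 ≤ C i j) {α : ℝ}
    (hα : 1 ≤ α) : ‖euclOp (matHadPow C α)‖ ≤ ‖euclOp C‖ ^ α := by
  by_cases h0 : ‖euclOp C‖ = 0
  · have hC0 : C = 0 := by
      ext i j
      exact le_antisymm ((entry_le_opNorm C hC i j).trans h0.le) (hC i j)
    have : matHadPow C α = 0 := by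
      ext i j
      show C i j ^ α = 0
      rw [hC0]
      show (0:ℝ) ^ α = 0
      exact Real.zero_rpow (by linarith)
    rw [this, h0, Real.zero_rpow (by linarith : α ≠ 0)]
    have hz : euclOp (0 : Matrix (Fin n) (Fin n) ℝ) = 0 := by
      rw [euclOp, Matrix.map_zero _ Complex.ofReal_zero, map_zero]
    rw [hz, norm_zero]
  · have hnorm : 0 < ‖euclOp C‖ := lt_of_le_of_ne (norm_nonneg _) (Ne.symm h0)
    set s : ℝ := ‖euclOp C‖ ^ (α - 1) with hs
    have hsnn : 0 ≤ s := Real.rpow_nonneg (norm_nonneg _) _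
    have hdom : ∀ i j, matHadPow C α i j ≤ (s • C) i j := by
      intro i j
      rw [matHadPow_apply, Matrix.smul_apply, smul_eq_mul]
      calc C i j ^ α = C i j ^ (α - 1) * C i j := by
            rw [← Real.rpow_add_one' (hC i j) (by linarith)]
            ring_nf
        _ ≤ s * C i j := by
            refine mul_le_mul_of_nonneg_right ?_ (hC i j)
            exact Real.rpow_le_rpow (hC i j) (entry_le_opNorm C hC i j) (by linarith)
    calc ‖euclOp (matHadPow C α)‖ ≤ ‖euclOp (s • C)‖ :=
          opNorm_le_opNorm_of_le _ _ (matHadPow_nonneg hC α) hdom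
      _ = s * ‖euclOp C‖ := by
          rw [euclOp_smul]
          have hns := norm_smul (s : ℂ) (euclOp C)
          rw [hns, Complex.norm_real, Real.norm_eq_abs, abs_of_nonneg hsnn]
      _ = ‖euclOp C‖ ^ α := by
          rw [hs, ← Real.rpow_add_one' (norm_nonneg _) (by linarith)]
          ring_nf

/-- PH: entrywise path-Hölder: `C^N ≤ ∏ (D_k^N)^{1/m}` entrywise. -/
lemma geom_mean_pow_le {m : ℕ} (hm : 0 < m) (D : Fin m → Matrix (Fin n) (Fin n) ℝ)
    (hD : ∀ k i j, 0 ≤ D k i j) (N : ℕ) : ∀ i j,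
    ((Matrix.of fun i j => ∏ k, D k i j ^ (1 / m : ℝ)) ^ N) i j ≤
      ∏ k, ((D k ^ N) i j) ^ (1 / m : ℝ) := by
  have hw : (0:ℝ) < 1 / m := by positivity
  set C : Matrix (Fin n) (Fin n) ℝ := Matrix.of fun i j => ∏ k, D k i j ^ (1 / m : ℝ) with hC
  have hCnn : ∀ i j, 0 ≤ C i j := by
    intro i j
    show (0:ℝ) ≤ ∏ k, D k i j ^ (1 / m : ℝ)
    exact Finset.prod_nonneg fun k _ => Real.rpow_nonneg (hD k i j) _
  induction N with
  | zero =>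
    intro i j
    rw [pow_zero]
    by_cases h : i = j
    · subst h
      rw [Matrix.one_apply_eq]
      have : ∀ k : Fin m, ((D k ^ 0) i i) ^ (1/m:ℝ) = 1 := by
        intro k
        rw [pow_zero, Matrix.one_apply_eq, Real.one_rpow]
      rw [Finset.prod_congr rfl fun k _ => this k, Finset.prod_const_one]
    · rw [Matrix.one_apply_ne h]
      exact Finset.prod_nonneg fun k _ => Real.rpow_nonneg (pow_entry_nonneg (hD k) 0 i j) _
  | succ N ih =>
    intro i j
    rw [pow_succ, Matrix.mul_apply]
    have step : ∀ l, (C ^ N) i l * C l j ≤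
        ∏ k, ((D k ^ N) i l * D k l j) ^ (1 / m : ℝ) := by
      intro l
      calc (C ^ N) i l * C l j
          ≤ (∏ k, ((D k ^ N) i l) ^ (1/m:ℝ)) * ∏ k, (D k l j) ^ (1/m:ℝ) := by
            refine mul_le_mul (ih i l) (le_refl _) (hCnn l j) ?_
            exact Finset.prod_nonneg fun k _ =>
              Real.rpow_nonneg (pow_entry_nonneg (hD k) N i l) _
        _ = ∏ k, ((D k ^ N) i l * D k l j) ^ (1/m:ℝ) := by
            rw [← Finset.prod_mul_distrib]
            exact Finset.prod_congr rfl fun k _ =>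
              (Real.mul_rpow (pow_entry_nonneg (hD k) N i l) (hD k l j)).symm
    calc ∑ l, (C ^ N) i l * C l j
        ≤ ∑ l, ∏ k, ((D k ^ N) i l * D k l j) ^ (1/m:ℝ) := Finset.sum_le_sum fun l _ => step l
      _ ≤ ∏ k, (∑ l, (D k ^ N) i l * D k l j) ^ (1/m:ℝ) :=
          holder_sum hm Finset.univ _
            (fun k l => mul_nonneg (pow_entry_nonneg (hD k) N i l) (hD k l j))
      _ = ∏ k, ((D k ^ (N+1)) i j) ^ (1/m:ℝ) := by
          refine Finset.prod_congr rfl fun k _ => ?_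
          rw [pow_succ, Matrix.mul_apply]

/-- spectral radius of euclOp is finite -/
lemma specRad_ne_top (M : Matrix (Fin n) (Fin n) ℝ) : spectralRadius ℂ (euclOp M) ≠ ⊤ := by
  have h := spectrum.spectralRadius_le_pow_nnnorm_pow_one_div ℂ (euclOp M) 0
  refine ne_top_of_le_ne_top ?_ h
  refine ENNReal.mul_ne_top ?_ ?_ <;>
    exact ENNReal.rpow_ne_top_of_nonneg (by positivity) ENNReal.coe_ne_top

/-- Gelfand's formula, real-valued version. -/
lemma gelfand_real (M : Matrix (Fin n) (Fin n) ℝ) :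
    Filter.Tendsto (fun N : ℕ => ‖(euclOp M) ^ N‖ ^ (1 / N : ℝ)) Filter.atTop
      (nhds (spectralRadius ℂ (euclOp M)).toReal) := by
  have h := spectrum.pow_norm_pow_one_div_tendsto_nhds_spectralRadius (euclOp M)
  have h2 := (ENNReal.tendsto_toReal (specRad_ne_top M)).comp h
  refine h2.congr fun N => ?_
  simp only [Function.comp_apply]
  rw [ENNReal.toReal_ofReal (Real.rpow_nonneg (norm_nonneg _) _)]

def specR (M : Matrix (Fin n) (Fin n) ℝ) : ℝ := (spectralRadius ℂ (euclOp M)).toReal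

lemma specR_nonneg (M : Matrix (Fin n) (Fin n) ℝ) : 0 ≤ specR M := ENNReal.toReal_nonneg

/-- Ra: `ρ(B^{(α)}) ≤ ρ(B)^α` for non-negative `B` and `α ≥ 1`. -/
lemma specR_hadPow_le {B : Matrix (Fin n) (Fin n) ℝ} (hB : ∀ i j, 0 ≤ B i j) {α : ℝ}
    (hα : 1 ≤ α) : specR (matHadPow B α) ≤ specR B ^ α := by
  have key : ∀ N : ℕ, ‖(euclOp (matHadPow B α)) ^ N‖ ≤ ‖(euclOp B) ^ N‖ ^ α := by
    intro N
    rw [← euclOp_pow, ← euclOp_pow]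
    calc ‖euclOp ((matHadPow B α) ^ N)‖ ≤ ‖euclOp (matHadPow (B ^ N) α)‖ :=
          opNorm_le_opNorm_of_le _ _ (pow_entry_nonneg (matHadPow_nonneg hB α) N)
            (hadPow_pow_le hB hα N)
      _ ≤ ‖euclOp (B ^ N)‖ ^ α := opNorm_hadPow_le (pow_entry_nonneg hB N) hα
  have key2 : ∀ N : ℕ, ‖(euclOp (matHadPow B α)) ^ N‖ ^ (1 / N : ℝ) ≤
      (‖(euclOp B) ^ N‖ ^ (1 / N : ℝ)) ^ α := by
    intro N
    have h1 := Real.rpow_le_rpow (norm_nonneg _) (key N) (by positivity : (0:ℝ) ≤ 1 / N)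
    refine h1.trans_eq ?_
    rw [← Real.rpow_mul (norm_nonneg _), ← Real.rpow_mul (norm_nonneg _), mul_comm]
  refine le_of_tendsto_of_tendsto' (gelfand_real (matHadPow B α)) ?_ key2
  exact (gelfand_real B).rpow_const (Or.inr (by linarith))

/-- Rb: `ρ(geometric mean) ≤ ∏ ρ(D_k)^{1/m}`. -/
lemma specR_geom_mean_le {m : ℕ} (hm : 0 < m) (D : Fin m → Matrix (Fin n) (Fin n) ℝ)
    (hD : ∀ k i j, 0 ≤ D k i j) :
    specR (Matrix.of fun i j => ∏ k, D k i j ^ (1 / m : ℝ)) ≤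
      ∏ k, specR (D k) ^ (1 / m : ℝ) := by
  set C : Matrix (Fin n) (Fin n) ℝ := Matrix.of fun i j => ∏ k, D k i j ^ (1 / m : ℝ) with hC
  have key : ∀ N : ℕ, ‖(euclOp C) ^ N‖ ^ (1 / N : ℝ) ≤
      ∏ k, (‖(euclOp (D k)) ^ N‖ ^ (1 / N : ℝ)) ^ (1 / m : ℝ) := by
    intro N
    have h1 : ‖(euclOp C) ^ N‖ ≤ ∏ k, ‖(euclOp (D k)) ^ N‖ ^ (1 / m : ℝ) := by
      rw [← euclOp_pow]
      calc ‖euclOp (C ^ N)‖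
          ≤ ‖euclOp (Matrix.of fun i j => ∏ k, ((D k ^ N) i j) ^ (1 / m : ℝ))‖ := by
            refine opNorm_le_opNorm_of_le _ _ ?_ ?_
            · refine pow_entry_nonneg (fun i j => ?_) N
              show (0:ℝ) ≤ ∏ k, D k i j ^ (1 / m : ℝ)
              exact Finset.prod_nonneg fun k _ => Real.rpow_nonneg (hD k i j) _
            · exact geom_mean_pow_le hm D hD N
        _ ≤ ∏ k, ‖euclOp (D k ^ N)‖ ^ (1 / m : ℝ) :=
            opNorm_geom_mean_le hm (fun k => D k ^ N) (fun k => pow_entry_nonneg (hD k) N)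
        _ = ∏ k, ‖(euclOp (D k)) ^ N‖ ^ (1 / m : ℝ) := by
            exact Finset.prod_congr rfl fun k _ => by rw [euclOp_pow]
    have h2 := Real.rpow_le_rpow (norm_nonneg _) h1 (by positivity : (0:ℝ) ≤ 1 / N)
    refine h2.trans_eq ?_
    rw [← Real.finset_prod_rpow _ _ (fun k _ => Real.rpow_nonneg (norm_nonneg _) _)]
    refine Finset.prod_congr rfl fun k _ => ?_
    rw [← Real.rpow_mul (norm_nonneg _), ← Real.rpow_mul (norm_nonneg _), mul_comm]
  refine le_of_tendsto_of_tendsto' (gelfand_real C) ?_ key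
  exact tendsto_finset_prod _ fun k _ =>
    (gelfand_real (D k)).rpow_const (Or.inr (by positivity))

lemma ofReal_prod_of_nonneg {ι : Type*} (s : Finset ι) (f : ι → ℝ) (hf : ∀ i ∈ s, 0 ≤ f i) :
    ENNReal.ofReal (∏ i ∈ s, f i) = ∏ i ∈ s, ENNReal.ofReal (f i) := by
  classical
  induction s using Finset.induction with
  | empty => simp
  | insert _ _ hnot ih =>
    rename_i a t
    rw [Finset.prod_insert hnot, Finset.prod_insert hnot,
      ENNReal.ofReal_mul (hf a (Finset.mem_insert_self a t)),
      ih fun i hi => hf i (Finset.mem_insert_of_mem hi)]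

/-- helper algebra: from `g k ≤ f k ^ (u/t)` conclude the rpow product inequality. -/
lemma prod_rpow_anti {m : ℕ} (f g : Fin m → ℝ) (hf : ∀ k, 0 ≤ f k) (hg : ∀ k, 0 ≤ g k)
    {t u : ℝ} (ht : 0 < t) (htu : t ≤ u) (h : ∀ k, g k ≤ f k ^ (u / t : ℝ)) :
    (∏ k, g k) ^ (1 / u : ℝ) ≤ (∏ k, f k) ^ (1 / t : ℝ) := by
  have hu : 0 < u := lt_of_lt_of_le ht htu
  have h1 : ∏ k, g k ≤ (∏ k, f k) ^ (u / t : ℝ) := by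
    calc ∏ k, g k ≤ ∏ k, f k ^ (u / t : ℝ) :=
          Finset.prod_le_prod (fun k _ => hg k) (fun k _ => h k)
      _ = (∏ k, f k) ^ (u / t : ℝ) :=
          Real.finset_prod_rpow _ _ (fun k _ => hf k) _
  have h2 := Real.rpow_le_rpow (Finset.prod_nonneg fun k _ => hg k) h1
    (by positivity : (0:ℝ) ≤ 1 / u)
  refine h2.trans_eq ?_
  rw [← Real.rpow_mul (Finset.prod_nonneg fun k _ => hf k)]
  congr 1
  field_simp

lemma matHadPow_comp (a : Matrix (Fin n) (Fin n) ℝ) (ha : ∀ i j, 0 ≤ a i j) {t u : ℝ}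
    (ht : 0 < t) : matHadPow a u = matHadPow (matHadPow a t) (u / t) := by
  ext i j
  show a i j ^ u = (a i j ^ t) ^ (u / t : ℝ)
  rw [← Real.rpow_mul (ha i j)]
  congr 1
  field_simp

lemma matHadProd_eq_geom_mean {m : ℕ} (hm : 0 < m) (A : Fin m → Matrix (Fin n) (Fin n) ℝ)
    (hA : ∀ k i j, 0 ≤ A k i j) :
    matHadProd A = Matrix.of fun i j => ∏ k, (matHadPow (A k) (m : ℝ)) i j ^ (1 / m : ℝ) := by
  ext i j
  show ∏ k, A k i j = ∏ k, (A k i j ^ (m:ℝ)) ^ (1 / m : ℝ)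
  refine Finset.prod_congr rfl fun k _ => ?_
  rw [← Real.rpow_mul (hA k i j), mul_one_div, div_self (by exact_mod_cast hm.ne' : (m:ℝ) ≠ 0),
    Real.rpow_one]

lemma specProd_conv {m : ℕ} (w : ℝ) (B : Fin m → Matrix (Fin n) (Fin n) ℝ) (hw : 0 < w) :
    (∏ k, spectralRadius ℂ (euclOp (B k))) ^ (1 / w : ℝ)
      = ENNReal.ofReal ((∏ k, specR (B k)) ^ (1 / w : ℝ)) := by
  have h1 : ∀ k : Fin m, spectralRadius ℂ (euclOp (B k)) = ENNReal.ofReal (specR (B k)) :=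
    fun k => (ENNReal.ofReal_toReal (specRad_ne_top _)).symm
  rw [Finset.prod_congr rfl fun k _ => h1 k,
    ← ofReal_prod_of_nonneg _ _ (fun k _ => specR_nonneg _),
    ENNReal.ofReal_rpow_of_nonneg (Finset.prod_nonneg fun k _ => specR_nonneg _)
      (by positivity)]

/-- for non-negative `n × n` matrices `A₁, …, A_m`, the functions
`r(t) = (ρ(A₁^{(t)})⋯ρ(A_m^{(t)}))^{1/t}` and `N(t) = (‖A₁^{(t)}‖⋯‖A_m^{(t)}‖)^{1/t}`
are non-increasing on `(0,∞)`, and `ρ(A₁∘⋯∘A_m) ≤ r(t)`, `‖A₁∘⋯∘A_m‖ ≤ N(t)` for all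
`t ∈ (0,m]`; here `ρ` and `‖·‖` are taken with respect to the Euclidean norm on `ℂⁿ`. -/
theorem matrix_hadamard_pow_functions_decreasing
    (n m : ℕ) (hm : 0 < m)
    (A : Fin m → Matrix (Fin n) (Fin n) ℝ) (hA : ∀ k i j, 0 ≤ A k i j) :
    (∀ t u : ℝ, 0 < t → t ≤ u →
      (∏ k, spectralRadius ℂ (euclOp (matHadPow (A k) u))) ^ (1 / u) ≤
        (∏ k, spectralRadius ℂ (euclOp (matHadPow (A k) t))) ^ (1 / t) ∧
      (∏ k, ‖euclOp (matHadPow (A k) u)‖) ^ (1 / u) ≤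
        (∏ k, ‖euclOp (matHadPow (A k) t)‖) ^ (1 / t)) ∧
    ∀ t : ℝ, 0 < t → t ≤ m →
      spectralRadius ℂ (euclOp (matHadProd A)) ≤
        (∏ k, spectralRadius ℂ (euclOp (matHadPow (A k) t))) ^ (1 / t) ∧
      ‖euclOp (matHadProd A)‖ ≤ (∏ k, ‖euclOp (matHadPow (A k) t)‖) ^ (1 / t) := by
  have monoR : ∀ t u : ℝ, 0 < t → t ≤ u →
      (∏ k, specR (matHadPow (A k) u)) ^ (1/u : ℝ) ≤
        (∏ k, specR (matHadPow (A k) t)) ^ (1/t : ℝ) := by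
    intro t u ht htu
    have hα : 1 ≤ u / t := (one_le_div ht).mpr htu
    refine prod_rpow_anti _ _ (fun k => specR_nonneg _) (fun k => specR_nonneg _) ht htu
      fun k => ?_
    rw [matHadPow_comp (A k) (hA k) ht]
    exact specR_hadPow_le (matHadPow_nonneg (hA k) t) hα
  have monoN : ∀ t u : ℝ, 0 < t → t ≤ u →
      (∏ k, ‖euclOp (matHadPow (A k) u)‖) ^ (1/u : ℝ) ≤
        (∏ k, ‖euclOp (matHadPow (A k) t)‖) ^ (1/t : ℝ) := by
    intro t u ht htu
    have hα : 1 ≤ u / t := (one_le_div ht).mpr htu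
    refine prod_rpow_anti _ _ (fun k => norm_nonneg _) (fun k => norm_nonneg _) ht htu
      fun k => ?_
    rw [matHadPow_comp (A k) (hA k) ht]
    exact opNorm_hadPow_le (matHadPow_nonneg (hA k) t) hα
  constructor
  · intro t u ht htu
    have hu : 0 < u := lt_of_lt_of_le ht htu
    refine ⟨?_, monoN t u ht htu⟩
    rw [specProd_conv u _ hu, specProd_conv t _ ht]
    exact ENNReal.ofReal_le_ofReal (monoR t u ht htu)
  · intro t ht htm
    have hmR : (0:ℝ) < m := by exact_mod_cast hm
    have hprod := matHadProd_eq_geom_mean hm A hA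
    constructor
    · have h1 : specR (matHadProd A) ≤ (∏ k, specR (matHadPow (A k) (m:ℝ))) ^ (1/(m:ℝ)) := by
        rw [← Real.finset_prod_rpow _ _ (fun k _ => specR_nonneg _), hprod]
        exact specR_geom_mean_le hm _ (fun k => matHadPow_nonneg (hA k) _)
      have hreal := h1.trans (monoR t (m:ℝ) ht htm)
      have hL : spectralRadius ℂ (euclOp (matHadProd A)) =
          ENNReal.ofReal (specR (matHadProd A)) :=
        (ENNReal.ofReal_toReal (specRad_ne_top _)).symm
      rw [hL, specProd_conv t _ ht]
      exact ENNReal.ofReal_le_ofReal hreal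
    · have h1 : ‖euclOp (matHadProd A)‖ ≤
          (∏ k, ‖euclOp (matHadPow (A k) (m:ℝ))‖) ^ (1/(m:ℝ)) := by
        rw [← Real.finset_prod_rpow _ _ (fun k _ => norm_nonneg _), hprod]
        exact opNorm_geom_mean_le hm _ (fun k => matHadPow_nonneg (hA k) _)
      exact h1.trans (monoN t (m:ℝ) ht htm)
end
end
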